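/- For every real x with 0 < x < 1/100, the series Σ_{n≥0} s_n x^n, where s_n = Σ_{k=0}^{n} binom(2n,2k) / binom(n,k), converges and its sum equals [ x · arctan( x/√(1−2x) ) + √(1−2x) ] / (1−2x)^(3/2). (Equivalently, this is the exponential generating function of the OEIS sequence A182525(n) = n! · s_n.) -/

import Mathlib

open intervalIntegral MeasureTheory Finset Real


lemma beta_nat (m : ℕ) : ∀ k : ℕ,
    ∫ t in (0:ℝ)..1, t ^ k * (1 - t) ^ m
      = (k.factorial * m.factorial : ℝ) / (k + m + 1).factorial := by
  induction m with
  | zero =>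
    intro k
    have hk : ((k:ℝ) + 1) ≠ 0 := by positivity
    simp [integral_pow, Nat.factorial_succ]
    field_simp
  | succ m ih =>
    intro k
    have hk : ((k:ℝ) + 1) ≠ 0 := by positivity
    have hparts := intervalIntegral.integral_mul_deriv_eq_deriv_mul
      (u := fun t : ℝ => (1 - t) ^ (m + 1))
      (u' := fun t : ℝ => -((m + 1) * (1 - t) ^ m))
      (v := fun t : ℝ => t ^ (k + 1) / (k + 1))
      (v' := fun t : ℝ => t ^ k)
      (a := (0:ℝ)) (b := 1)
      (fun t _ => by
        have h1 : HasDerivAt (fun t : ℝ => 1 - t) (-1) t := by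
          simpa using (hasDerivAt_id t).const_sub (1:ℝ)
        have := h1.fun_pow (m + 1)
        simpa [mul_comm, mul_assoc, mul_left_comm] using this)
      (fun t _ => by
        have := (hasDerivAt_pow (k + 1) t).div_const ((k:ℝ) + 1)
        simpa [Nat.cast_add, mul_comm, mul_div_assoc, div_self hk] using this)
      (by apply Continuous.intervalIntegrable; continuity)
      (by apply Continuous.intervalIntegrable; continuity)
    have h2 : ∫ t in (0:ℝ)..1, t ^ k * (1 - t) ^ (m + 1)
        = ((m:ℝ) + 1) / ((k:ℝ) + 1) * ∫ t in (0:ℝ)..1, t ^ (k + 1) * (1 - t) ^ m := by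
      have e1 : ∫ t in (0:ℝ)..1, t ^ k * (1 - t) ^ (m + 1)
          = ∫ t in (0:ℝ)..1, (1 - t) ^ (m + 1) * t ^ k := by
        congr 1; ext t; ring
      rw [e1, hparts]
      have e2 : ∀ t : ℝ, -((m:ℝ) + 1) * (1 - t) ^ m * (t ^ (k + 1) / (k + 1))
          = -(((m:ℝ) + 1) / ((k:ℝ) + 1) * (t ^ (k + 1) * (1 - t) ^ m)) := by
        intro t; field_simp
      rw [show (∫ x in (0:ℝ)..1, -(((m:ℝ) + 1) * (1 - x) ^ m) * (x ^ (k + 1) / (↑k + 1)))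
          = ∫ x in (0:ℝ)..1, -(((m:ℝ) + 1) / ((k:ℝ) + 1) * (x ^ (k + 1) * (1 - x) ^ m)) by
            congr 1; ext t; rw [neg_mul, neg_inj]; field_simp]
      rw [intervalIntegral.integral_neg, intervalIntegral.integral_const_mul]
      norm_num
    rw [h2, ih (k + 1)]
    have : (k + 1 + m + 1).factorial = (k + (m+1) + 1).factorial := by ring_nf
    rw [this]
    have hden : ((k + (m+1) + 1).factorial : ℝ) ≠ 0 := by positivity
    push_cast [Nat.factorial_succ]
    field_simp

lemma inv_choose (n k : ℕ) (hk : k ≤ n) :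
    ∫ t in (0:ℝ)..1, t ^ k * (1 - t) ^ (n - k)
      = 1 / (((n:ℝ) + 1) * (n.choose k)) := by
  rw [beta_nat]
  have h1 : k + (n - k) + 1 = n + 1 := by omega
  rw [h1]
  have h2 : (n.choose k) * k.factorial * (n-k).factorial = n.factorial :=
    Nat.choose_mul_factorial_mul_factorial hk
  have h3 : ((n+1).factorial : ℝ) = (n + 1) * n.factorial := by
    rw [Nat.factorial_succ]; push_cast; ring
  rw [h3]
  have hc : 0 < (n.choose k : ℝ) := by
    exact_mod_cast Nat.cast_pos.mpr (Nat.choose_pos hk)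
  rw [div_eq_div_iff (by positivity) (by positivity)]
  rw [← h2]
  push_cast
  ring

lemma even_binom (n : ℕ) (p q : ℝ) :
    ∑ k ∈ range (n+1), ((2*n).choose (2*k) : ℝ) * (p^2) ^ k * (q^2) ^ (n-k)
      = ((p+q)^(2*n) + (p-q)^(2*n)) / 2 := by
  have hA : (p+q)^(2*n) = ∑ j ∈ range (2*n+1), p^j * q^(2*n-j) * ((2*n).choose j : ℝ) :=
    add_pow p q (2*n)
  have hB : (p-q)^(2*n)
      = ∑ j ∈ range (2*n+1), p^j * q^(2*n-j) * ((-1:ℝ)^j * ((2*n).choose j : ℝ)) := by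
    have := add_pow p (-q) (2*n)
    rw [← sub_eq_add_neg] at this
    rw [this]
    refine Finset.sum_congr rfl fun j hj => ?_
    have hj' : j ≤ 2*n := by simpa [Nat.lt_succ_iff] using hj
    have hpar : (-q)^(2*n - j) = (-1:ℝ)^j * q^(2*n-j) := by
      rw [neg_pow]
      congr 1
      have : (-1:ℝ)^(2*n-j) * (-1:ℝ)^j = 1 := by
        rw [← pow_add, Nat.sub_add_cancel hj']
        simp [pow_mul]
      have h2 : ((-1:ℝ)^j) * ((-1:ℝ)^j) = 1 := by
        rcases Nat.even_or_odd j with h | h <;> simp [h.neg_one_pow] <;> norm_num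
      linear_combination ((-1:ℝ)^j) * this - ((-1:ℝ)^(2*n-j)) * h2
    rw [hpar]; ring
  have key : (p+q)^(2*n) + (p-q)^(2*n)
      = ∑ j ∈ range (2*n+1), (if Even j then 2 * (p^j * q^(2*n-j) * ((2*n).choose j : ℝ)) else 0) := by
    rw [hA, hB, ← Finset.sum_add_distrib]
    refine Finset.sum_congr rfl fun j _ => ?_
    rcases Nat.even_or_odd j with h | h
    · simp [h, h.neg_one_pow]; ring
    · simp [h, Nat.not_even_iff_odd.mpr h, h.neg_one_pow]
  rw [key, ← Finset.sum_filter]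
  rw [show (∑ j ∈ (range (2*n+1)).filter (fun j => Even j),
        2 * (p ^ j * q ^ (2*n - j) * ((2*n).choose j : ℝ)))
      = 2 * ∑ j ∈ (range (2*n+1)).filter (fun j => Even j),
        (p ^ j * q ^ (2*n - j) * ((2*n).choose j : ℝ)) from (Finset.mul_sum _ _ _).symm]
  rw [mul_div_cancel_left₀ _ (two_ne_zero)]
  refine Finset.sum_nbij' (fun k => 2*k) (fun j => j/2) ?_ ?_ ?_ ?_ ?_
  · intro k hk
    simp only [Finset.mem_filter, Finset.mem_range] at hk ⊢
    constructor
    · omega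
    · exact ⟨k, by ring⟩
  · intro j hj
    simp only [Finset.mem_filter, Finset.mem_range] at hj ⊢
    omega
  · intro k _; omega
  · intro j hj
    simp only [Finset.mem_filter, Finset.mem_range] at hj
    obtain ⟨-, m, hm⟩ := hj
    omega
  · intro k hk
    simp only [Finset.mem_range] at hk
    have h1 : 2*n - 2*k = 2*(n-k) := by omega
    rw [h1, pow_mul, pow_mul]
    ring

lemma pointwise_sum (n : ℕ) (t : ℝ) (ht : t ∈ Set.Icc (0:ℝ) 1) :
    ∑ k ∈ range (n+1), ((2*n).choose (2*k) : ℝ) * (t ^ k * (1-t) ^ (n-k))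
      = ((1 + 2*Real.sqrt (t*(1-t)))^n + (1 - 2*Real.sqrt (t*(1-t)))^n)/2 := by
  obtain ⟨ht0, ht1⟩ := ht
  have ht1' : (0:ℝ) ≤ 1 - t := by linarith
  set p := Real.sqrt t with hp
  set q := Real.sqrt (1-t) with hq
  have hp2 : p^2 = t := Real.sq_sqrt ht0
  have hq2 : q^2 = 1 - t := Real.sq_sqrt ht1'
  have hpq : p * q = Real.sqrt (t*(1-t)) := (Real.sqrt_mul ht0 _).symm
  have h1 : (p + q)^(2*n) = (1 + 2*Real.sqrt (t*(1-t)))^n := by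
    rw [pow_mul]
    congr 1
    rw [add_sq]
    rw [hp2, hq2, ← hpq]; ring
  have h2 : (p - q)^(2*n) = (1 - 2*Real.sqrt (t*(1-t)))^n := by
    rw [pow_mul]
    congr 1
    rw [sub_sq]
    rw [hp2, hq2, ← hpq]; ring
  have := even_binom n p q
  rw [hp2, hq2, h1, h2] at this
  rw [← this]
  refine Finset.sum_congr rfl fun k _ => by ring

lemma int_rep (n : ℕ) :
    (∑ k ∈ range (n+1), ((2*n).choose (2*k) : ℝ) / (n.choose k))
      = ((n:ℝ)+1) * ∫ t in (0:ℝ)..1,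
          ((1 + 2*Real.sqrt (t*(1-t)))^n + (1 - 2*Real.sqrt (t*(1-t)))^n)/2 := by
  have hcont : ∀ k, Continuous (fun t : ℝ => ((2*n).choose (2*k) : ℝ) * (t ^ k * (1-t) ^ (n-k))) := by
    intro k; continuity
  have h1 : ∫ t in (0:ℝ)..1,
        ((1 + 2*Real.sqrt (t*(1-t)))^n + (1 - 2*Real.sqrt (t*(1-t)))^n)/2
      = ∫ t in (0:ℝ)..1, ∑ k ∈ range (n+1), ((2*n).choose (2*k) : ℝ) * (t ^ k * (1-t) ^ (n-k)) := by
    rw [intervalIntegral.integral_of_le zero_le_one, intervalIntegral.integral_of_le zero_le_one]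
    refine setIntegral_congr_fun measurableSet_Ioc fun t ht => ?_
    exact (pointwise_sum n t (Set.mem_Icc_of_Ioc ht)).symm
  rw [h1, intervalIntegral.integral_finset_sum
    (fun k _ => ((hcont k).intervalIntegrable 0 1)), Finset.mul_sum]
  refine Finset.sum_congr rfl fun k hk => ?_
  have hk' : k ≤ n := by simpa [Nat.lt_succ_iff] using hk
  rw [intervalIntegral.integral_const_mul, inv_choose n k hk']
  have hc : (0:ℝ) < (n.choose k : ℝ) := by exact_mod_cast Nat.choose_pos hk'
  field_simp

lemma ftc_part (x : ℝ) (hx : 0 < x) (hx' : x < 1 / 100) :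
    ∫ t in (0:ℝ)..1,
        ((1-x)^2 + 4*x^2*(t*(1-t))) / ((1-x)^2 - 4*x^2*(t*(1-t)))^2
      = (x * Real.arctan (x / Real.sqrt (1 - 2 * x)) + Real.sqrt (1 - 2 * x)) /
        Real.sqrt (1 - 2 * x) ^ 3 := by
  set a := Real.sqrt (1 - 2*x) with hadef
  have h2x : 0 < 1 - 2*x := by linarith
  have ha : 0 < a := Real.sqrt_pos.mpr h2x
  have ha2 : a^2 = 1 - 2*x := Real.sq_sqrt h2x.le
  have hane : a ≠ 0 := ne_of_gt ha
  have hD : ∀ t : ℝ, 0 < a^2 + x^2*(2*t-1)^2 := by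
    intro t
    have := pow_pos ha 2
    nlinarith [sq_nonneg (x*(2*t-1))]
  have hDden : ∀ t : ℝ, (1-x)^2 - 4*x^2*(t*(1-t)) = a^2 + x^2*(2*t-1)^2 := by
    intro t; linear_combination -ha2
  have hNum : ∀ t : ℝ, (1-x)^2 + 4*x^2*(t*(1-t)) = a^2 + 2*x^2 - x^2*(2*t-1)^2 := by
    intro t; linear_combination -ha2
  set G : ℝ → ℝ := fun t =>
    (x/(2*a^3)) * Real.arctan (x*(2*t-1)/a)
      + ((a^2+x^2)/2) * ((2*t-1)/(a^2*(a^2 + x^2*(2*t-1)^2))) with hG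
  have hderiv : ∀ t : ℝ, HasDerivAt G
      (((1-x)^2 + 4*x^2*(t*(1-t))) / ((1-x)^2 - 4*x^2*(t*(1-t)))^2) t := by
    intro t
    have hlin : HasDerivAt (fun t : ℝ => x*(2*t-1)/a) (2*x/a) t := by
      have h1 : HasDerivAt (fun t : ℝ => x*(2*t-1)) (x*2) t := by
        have : HasDerivAt (fun t : ℝ => 2*t-1) 2 t := by
          simpa using ((hasDerivAt_id t).const_mul (2:ℝ)).sub_const 1
        exact this.const_mul x
      simpa [mul_comm, mul_div_assoc] using h1.div_const a
    have harct : HasDerivAt (fun t : ℝ => Real.arctan (x*(2*t-1)/a))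
        ((1/(1+(x*(2*t-1)/a)^2)) * (2*x/a)) t :=
      (Real.hasDerivAt_arctan _).comp t hlin
    have hnum : HasDerivAt (fun t : ℝ => 2*t-1) 2 t := by
      simpa using ((hasDerivAt_id t).const_mul (2:ℝ)).sub_const 1
    have hden' : HasDerivAt (fun t : ℝ => a^2*(a^2 + x^2*(2*t-1)^2))
        (a^2*(x^2*(2*(2*t-1)*2))) t := by
      have h3 : HasDerivAt (fun t : ℝ => (2*t-1)^2) (2*(2*t-1)*2) t := by
        simpa using hnum.fun_pow 2
      have h4 : HasDerivAt (fun t : ℝ => a^2 + x^2*(2*t-1)^2) (x^2*(2*(2*t-1)*2)) t :=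
        (h3.const_mul (x^2)).const_add (a^2)
      exact h4.const_mul (a^2)
    have hratio : HasDerivAt (fun t : ℝ => (2*t-1)/(a^2*(a^2 + x^2*(2*t-1)^2)))
        ((2*(a^2*(a^2 + x^2*(2*t-1)^2)) - (2*t-1)*(a^2*(x^2*(2*(2*t-1)*2))))
          / (a^2*(a^2 + x^2*(2*t-1)^2))^2) t :=
      hnum.div hden' (by positivity)
    have hsum := (harct.const_mul (x/(2*a^3))).add (hratio.const_mul ((a^2+x^2)/2))
    refine hsum.congr_deriv ?_
    rw [hDden t, hNum t]
    have hDne : a^2 + x^2*(2*t-1)^2 ≠ 0 := ne_of_gt (hD t)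
    have e1 : (1 + (x*(2*t-1)/a)^2) = (a^2 + x^2*(2*t-1)^2)/a^2 := by
      field_simp
    rw [e1]
    field_simp
    ring
  have hcont : Continuous (fun t : ℝ =>
      ((1-x)^2 + 4*x^2*(t*(1-t))) / ((1-x)^2 - 4*x^2*(t*(1-t)))^2) := by
    apply Continuous.div (by continuity) (by continuity)
    intro t
    have := hD t
    rw [hDden t]
    positivity
  rw [intervalIntegral.integral_eq_sub_of_hasDerivAt (fun t _ => hderiv t)
    (hcont.intervalIntegrable 0 1)]
  have e2 : x*(2*(1:ℝ)-1)/a = x/a := by ring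
  have e3 : x*(2*(0:ℝ)-1)/a = -(x/a) := by ring
  simp only [hG, e2, e3, Real.arctan_neg]
  have hax : (0:ℝ) < a^2 + x^2 := by positivity
  field_simp
  ring

lemma hs_aux {y : ℝ} (hy : |y| < 1) :
    HasSum (fun n : ℕ => ((n:ℝ)+1) * y^n) (1/(1-y)^2) := by
  have hy' : ‖y‖ < 1 := by rwa [Real.norm_eq_abs]
  have hne : (1:ℝ) - y ≠ 0 := by
    have : y < 1 := lt_of_abs_lt hy
    intro h; linarith [sub_eq_zero.mp h]
  have h1 := hasSum_coe_mul_geometric_of_norm_lt_one hy'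
  have h2 := hasSum_geometric_of_norm_lt_one hy'
  have h3 := h1.add h2
  have e : (fun n : ℕ => ((n:ℝ)+1) * y^n) = fun b : ℕ => ↑b * y ^ b + y ^ b := by
    funext n; ring
  rw [e, show (1:ℝ)/(1-y)^2 = y/(1-y)^2 + (1-y)⁻¹ by field_simp; ring]
  exact h3

/-- The (ordinary generating function of `sₙ = Σ_{k=0}^{n} C(2n,2k)/C(n,k)`, i.e. the)
exponential generating function of A182525: for `0 < x < 1/100`, `Σ_{n ≥ 0} sₙ xⁿ`
converges to `(x·arctan(x/√(1-2x)) + √(1-2x)) / (√(1-2x))³`. -/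
theorem A182525_egf (x : ℝ) (hx : 0 < x) (hx' : x < 1 / 100) :
    HasSum (fun n : ℕ =>
      (∑ k ∈ Finset.range (n + 1), (((2 * n).choose (2 * k) : ℝ)) / (n.choose k)) * x ^ n)
      ((x * Real.arctan (x / Real.sqrt (1 - 2 * x)) + Real.sqrt (1 - 2 * x)) /
        Real.sqrt (1 - 2 * x) ^ 3) := by
  set w : ℝ → ℝ := fun t => Real.sqrt (t*(1-t)) with hw
  set F : ℕ → ℝ → ℝ := fun n t =>
    (((n:ℝ)+1)/2) * ((x*(1+2*w t))^n + (x*(1-2*w t))^n) with hF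
  set μ := volume.restrict (Set.Ioc (0:ℝ) 1) with hμ
  -- basic bounds on w
  have hw0 : ∀ t, 0 ≤ w t := fun t => Real.sqrt_nonneg _
  have hw1 : ∀ t ∈ Set.Icc (0:ℝ) 1, w t ≤ 1/2 := by
    intro t ht
    have h1 : t*(1-t) ≤ 1/4 := by nlinarith [sq_nonneg (t - 1/2)]
    have := Real.sqrt_le_sqrt h1
    rwa [show (1/4:ℝ) = (1/2)^2 by norm_num, Real.sqrt_sq (by norm_num : (0:ℝ) ≤ 1/2)] at this
  have hy1 : ∀ t ∈ Set.Icc (0:ℝ) 1, 0 ≤ x*(1-2*w t) := by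
    intro t ht
    have := hw1 t ht
    nlinarith
  have hy2 : ∀ t ∈ Set.Icc (0:ℝ) 1, x*(1+2*w t) ≤ 2*x := by
    intro t ht
    have := hw1 t ht
    nlinarith
  have hy0 : ∀ t, 0 ≤ x*(1+2*w t) := by
    intro t; have := hw0 t; nlinarith
  have h2x1 : 2*x < 1 := by linarith
  -- continuity and integrability
  have hwcont : Continuous w :=
    Real.continuous_sqrt.comp (continuous_id.mul (continuous_const.sub continuous_id))
  have hFcont : ∀ n, Continuous (F n) := by
    intro n
    have c1 : Continuous fun t => x*(1+2*w t) :=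
      continuous_const.mul (continuous_const.add (continuous_const.mul hwcont))
    have c2 : Continuous fun t => x*(1-2*w t) :=
      continuous_const.mul (continuous_const.sub (continuous_const.mul hwcont))
    exact continuous_const.mul ((c1.pow n).add (c2.pow n))
  have hFint : ∀ n, Integrable (F n) μ := fun n => (hFcont n).integrableOn_Ioc
  -- bound
  have hFle : ∀ n, ∀ t ∈ Set.Icc (0:ℝ) 1, ‖F n t‖ ≤ ((n:ℝ)+1) * (2*x)^n := by
    intro n t ht
    have h1 : (0:ℝ) ≤ x*(1-2*w t) := hy1 t ht
    have h2 : x*(1+2*w t) ≤ 2*x := hy2 t ht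
    have h3 : (x*(1+2*w t))^n ≤ (2*x)^n := pow_le_pow_left₀ (hy0 t) h2 n
    have h4 : (x*(1-2*w t))^n ≤ (2*x)^n := by
      apply pow_le_pow_left₀ h1
      nlinarith [hw0 t]
    have h5 : (0:ℝ) ≤ F n t := by
      apply mul_nonneg (by positivity)
      have := pow_nonneg (hy0 t) n
      have := pow_nonneg h1 n
      linarith
    rw [Real.norm_eq_abs, abs_of_nonneg h5]
    simp only [hF]
    nlinarith [h3, h4]
  have hsummable : Summable (fun n : ℕ => ((n:ℝ)+1)*(2*x)^n) := by
    refine (hs_aux ?_).summable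
    rw [abs_of_nonneg (by linarith)]
    exact h2x1
  have hF_sum : Summable fun n => ∫ t, ‖F n t‖ ∂μ := by
    apply hsummable.of_nonneg_of_le
      (fun n => integral_nonneg (fun t => norm_nonneg _))
    intro n
    calc ∫ t, ‖F n t‖ ∂μ ≤ ∫ _t, ((n:ℝ)+1)*(2*x)^n ∂μ := by
          apply integral_mono_ae ((hFint n).norm) (integrable_const _)
          filter_upwards [ae_restrict_mem measurableSet_Ioc] with t ht
          exact hFle n t (Set.mem_Icc_of_Ioc ht)
      _ = ((n:ℝ)+1)*(2*x)^n := by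
          simp [hμ, Real.volume_Ioc]
  have key := hasSum_integral_of_summable_integral_norm hFint hF_sum
  -- identify term integrals
  have hterm : ∀ n : ℕ, (∫ t, F n t ∂μ)
      = (∑ k ∈ Finset.range (n + 1), (((2 * n).choose (2 * k) : ℝ)) / (n.choose k)) * x ^ n := by
    intro n
    have e0 : (∫ t, F n t ∂μ) = ∫ t in (0:ℝ)..1, F n t := by
      rw [intervalIntegral.integral_of_le zero_le_one]
    have e1 : ∀ t : ℝ, F n t
        = (((n:ℝ)+1)*x^n) * (((1 + 2*w t)^n + (1 - 2*w t)^n)/2) := by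
      intro t
      simp only [hF, mul_pow]
      ring
    rw [e0, show (fun t => F n t) = fun t =>
        (((n:ℝ)+1)*x^n) * (((1 + 2*w t)^n + (1 - 2*w t)^n)/2) from funext e1]
    rw [intervalIntegral.integral_const_mul, int_rep n]
    ring
  -- identify the integral of the sum
  have hmain : (∫ t, (∑' n, F n t) ∂μ)
      = (x * Real.arctan (x / Real.sqrt (1 - 2 * x)) + Real.sqrt (1 - 2 * x)) /
        Real.sqrt (1 - 2 * x) ^ 3 := by
    rw [← ftc_part x hx hx']
    rw [intervalIntegral.integral_of_le zero_le_one]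
    refine setIntegral_congr_fun measurableSet_Ioc fun t ht => ?_
    have ht' : t ∈ Set.Icc (0:ℝ) 1 := Set.mem_Icc_of_Ioc ht
    have hwt2 : (w t)^2 = t*(1-t) := Real.sq_sqrt (by nlinarith [ht'.1, ht'.2])
    have hB2 : (2*x*w t)^2 = 4*x^2*(t*(1-t)) := by
      rw [mul_pow, mul_pow, hwt2]; ring
    have hyp : |x*(1+2*w t)| < 1 := by
      rw [abs_of_nonneg (hy0 t)]
      calc x*(1+2*w t) ≤ 2*x := hy2 t ht'
        _ < 1 := h2x1
    have hym : |x*(1-2*w t)| < 1 := by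
      rw [abs_of_nonneg (hy1 t ht')]
      calc x*(1-2*w t) ≤ x := by nlinarith [hw0 t]
        _ < 1 := by linarith
    have hsp := hs_aux hyp
    have hsm := hs_aux hym
    have hFt : HasSum (fun n => F n t)
        ((1/(1-x*(1+2*w t))^2 + 1/(1-x*(1-2*w t))^2)/2) := by
      have := (hsp.add hsm).div_const 2
      have e : (fun n => F n t) = fun n : ℕ =>
          (((n:ℝ)+1) * (x*(1+2*w t))^n + ((n:ℝ)+1) * (x*(1-2*w t))^n)/2 := by
        funext n
        simp only [hF]
        ring
      rw [e]
      exact this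
    rw [hFt.tsum_eq]
    -- algebra: convert to the rational form
    have hAB1 : 0 < 1 - x*(1+2*w t) := by
      have := hy2 t ht'; linarith
    have hAB2 : 0 < 1 - x*(1-2*w t) := by
      have := hy1 t ht'
      have : x*(1-2*w t) ≤ x := by nlinarith [hw0 t]
      linarith
    have eA : 1 - x*(1+2*w t) = (1-x) - 2*x*w t := by ring
    have eB : 1 - x*(1-2*w t) = (1-x) + 2*x*w t := by ring
    have eNum : (1-x)^2 + 4*x^2*(t*(1-t)) = (1-x)^2 + (2*x*w t)^2 := by rw [hB2]
    have eDen : (1-x)^2 - 4*x^2*(t*(1-t))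
        = ((1-x) - 2*x*w t) * ((1-x) + 2*x*w t) := by
      rw [← hB2]; ring
    rw [eA, eB, eNum, eDen]
    have h1 : ((1-x) - 2*x*w t) ≠ 0 := by rw [← eA]; exact ne_of_gt hAB1
    have h2 : ((1-x) + 2*x*w t) ≠ 0 := by rw [← eB]; exact ne_of_gt hAB2
    rw [div_add_div _ _ (pow_ne_zero 2 h1) (pow_ne_zero 2 h2), div_div,
      div_eq_div_iff (mul_ne_zero (mul_ne_zero (pow_ne_zero 2 h1) (pow_ne_zero 2 h2)) two_ne_zero)
        (pow_ne_zero 2 (mul_ne_zero h1 h2))]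
    ring
  rw [← hmain]
  have : (fun n : ℕ =>
      (∑ k ∈ Finset.range (n + 1), (((2 * n).choose (2 * k) : ℝ)) / (n.choose k)) * x ^ n)
      = fun n => ∫ t, F n t ∂μ := funext fun n => (hterm n).symm
  rw [this]
  exact key
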